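/- (Probability that a Byzantine client survives the score-based selection; inequalities C.85–C.91 in the paper.) Let n, f be natural numbers with f ≤ n and n − f ≥ 1. Let s₁, …, sₙ : Ω → ℝ be real random variables with finite second moments, let H ⊆ Fin n with |H| = n − f, and let b ∈ Fin n with b ∉ H. Let A < C be reals and B, D > 0 reals such that for every h ∈ H, 𝔼[s_h] ≤ A and Var[s_h] ≤ B, while 𝔼[s_b] ≥ C and Var[s_b] ≤ D. Then P( { ω : ∃ I ⊆ Fin n, |I| = n − f ∧ b ∈ I ∧ (∀ i ∈ I, ∀ j ∉ I, s_i(ω) ≤ s_j(ω)) } ) ≤ (n − f + 1)·(√B + √D)² / (C − A)². -/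

import Mathlib

open MeasureTheory ProbabilityTheory Finset

/-- Inequalities C.85–C.91: the probability that a Byzantine client `b` survives the
score-based selection of the `n − f` clients with smallest scores is at most
`(n − f + 1)·(√B + √D)²/(C − A)²`. -/
theorem byzantine_survival_probability_bound
    {Ω : Type*} [MeasurableSpace Ω] (P : Measure Ω) [IsProbabilityMeasure P]
    (n f : ℕ) (hf : f ≤ n) (hnf : 1 ≤ n - f)
    (s : Fin n → Ω → ℝ) (hs : ∀ i, MemLp (s i) 2 P)
    (H : Finset (Fin n)) (hH : H.card = n - f)
    (b : Fin n) (hb : b ∉ H)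
    (A B C D : ℝ) (hAC : A < C) (hB : 0 < B) (hD : 0 < D)
    (hmeanH : ∀ h ∈ H, ∫ ω, s h ω ∂P ≤ A)
    (hvarH : ∀ h ∈ H, variance (s h) P ≤ B)
    (hmeanB : C ≤ ∫ ω, s b ω ∂P)
    (hvarB : variance (s b) P ≤ D) :
    (P {ω | ∃ I : Finset (Fin n), I.card = n - f ∧ b ∈ I ∧
        ∀ i ∈ I, ∀ j ∉ I, s i ω ≤ s j ω}).toReal ≤
      ((n : ℝ) - f + 1) * (Real.sqrt B + Real.sqrt D) ^ 2 / (C - A) ^ 2 := by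
  have hsB : 0 < Real.sqrt B := Real.sqrt_pos.mpr hB
  have hsD : 0 < Real.sqrt D := Real.sqrt_pos.mpr hD
  set sB := Real.sqrt B with hsBdef
  set sD := Real.sqrt D with hsDdef
  have hS : 0 < sB + sD := by positivity
  have hCA : 0 < C - A := sub_pos.mpr hAC
  set τ : ℝ := (sD * A + sB * C) / (sB + sD) with hτ
  have hτA : τ - A = sB * (C - A) / (sB + sD) := by
    rw [hτ]; field_simp; ring
  have hCτ : C - τ = sD * (C - A) / (sB + sD) := by
    rw [hτ]; field_simp; ring
  have hτA' : 0 < τ - A := by rw [hτA]; positivity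
  have hCτ' : 0 < C - τ := by rw [hCτ]; positivity
  set K : ℝ := (sB + sD) ^ 2 / (C - A) ^ 2 with hK
  have hK0 : 0 ≤ K := by positivity
  have hBK : B / (τ - A) ^ 2 = K := by
    rw [hτA, hK, div_pow, mul_pow, hsBdef, Real.sq_sqrt hB.le]
    field_simp
  have hDK : D / (C - τ) ^ 2 = K := by
    rw [hCτ, hK, div_pow, mul_pow, hsDdef, Real.sq_sqrt hD.le]
    field_simp
  -- tail bounds via Chebyshev
  have tailH : ∀ h ∈ H, P {ω | τ ≤ s h ω} ≤ ENNReal.ofReal K := by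
    intro h hh
    have hsub : {ω | τ ≤ s h ω} ⊆ {ω | (τ - A) ≤ |s h ω - ∫ ω, s h ω ∂P|} := by
      intro ω hω
      simp only [Set.mem_setOf_eq] at *
      have hm := hmeanH h hh
      have : τ - A ≤ s h ω - ∫ ω, s h ω ∂P := by linarith
      exact this.trans (le_abs_self _)
    calc P {ω | τ ≤ s h ω} ≤ P {ω | (τ - A) ≤ |s h ω - ∫ ω, s h ω ∂P|} := measure_mono hsub
      _ ≤ ENNReal.ofReal (variance (s h) P / (τ - A) ^ 2) :=
          meas_ge_le_variance_div_sq (hs h) hτA'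
      _ ≤ ENNReal.ofReal K := by
          apply ENNReal.ofReal_le_ofReal
          rw [← hBK]
          gcongr
          exact hvarH h hh
  have tailB : P {ω | s b ω ≤ τ} ≤ ENNReal.ofReal K := by
    have hsub : {ω | s b ω ≤ τ} ⊆ {ω | (C - τ) ≤ |s b ω - ∫ ω, s b ω ∂P|} := by
      intro ω hω
      simp only [Set.mem_setOf_eq] at *
      have : C - τ ≤ -(s b ω - ∫ ω, s b ω ∂P) := by linarith
      exact this.trans (neg_le_abs _)
    calc P {ω | s b ω ≤ τ} ≤ P {ω | (C - τ) ≤ |s b ω - ∫ ω, s b ω ∂P|} := measure_mono hsub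
      _ ≤ ENNReal.ofReal (variance (s b) P / (C - τ) ^ 2) :=
          meas_ge_le_variance_div_sq (hs b) hCτ'
      _ ≤ ENNReal.ofReal K := by
          apply ENNReal.ofReal_le_ofReal
          rw [← hDK]
          gcongr
  -- event inclusion
  have hEsub : {ω | ∃ I : Finset (Fin n), I.card = n - f ∧ b ∈ I ∧
      ∀ i ∈ I, ∀ j ∉ I, s i ω ≤ s j ω} ⊆
      {ω | s b ω ≤ τ} ∪ ⋃ h ∈ H, {ω | τ ≤ s h ω} := by
    intro ω hω
    obtain ⟨I, hIcard, hbI, hle⟩ := hω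
    by_cases hbτ : s b ω ≤ τ
    · exact Or.inl hbτ
    · right
      have hns : ¬ H ⊆ I := by
        intro hHI
        have hins : insert b H ⊆ I := Finset.insert_subset hbI hHI
        have := Finset.card_le_card hins
        rw [Finset.card_insert_of_notMem hb, hH, hIcard] at this
        omega
      obtain ⟨h, hhH, hhI⟩ := Finset.not_subset.mp hns
      have hbh := hle b hbI h hhI
      exact Set.mem_biUnion hhH (by simp only [Set.mem_setOf_eq]; linarith)
  -- union bound
  have hPE : P {ω | ∃ I : Finset (Fin n), I.card = n - f ∧ b ∈ I ∧
      ∀ i ∈ I, ∀ j ∉ I, s i ω ≤ s j ω} ≤ ENNReal.ofReal (((n - f : ℕ) + 1) * K) := by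
    calc P _ ≤ P ({ω | s b ω ≤ τ} ∪ ⋃ h ∈ H, {ω | τ ≤ s h ω}) := measure_mono hEsub
      _ ≤ P {ω | s b ω ≤ τ} + P (⋃ h ∈ H, {ω | τ ≤ s h ω}) := measure_union_le _ _
      _ ≤ ENNReal.ofReal K + ∑ h ∈ H, P {ω | τ ≤ s h ω} :=
          add_le_add tailB (measure_biUnion_finset_le _ _)
      _ ≤ ENNReal.ofReal K + ∑ h ∈ H, ENNReal.ofReal K :=
          add_le_add le_rfl (Finset.sum_le_sum tailH)
      _ = ENNReal.ofReal K + (n - f : ℕ) * ENNReal.ofReal K := by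
          rw [Finset.sum_const, hH, nsmul_eq_mul]
      _ = ENNReal.ofReal (((n - f : ℕ) + 1) * K) := by
          rw [show (((n - f : ℕ) : ℝ) + 1) * K = K + ((n - f : ℕ) : ℝ) * K by ring,
            ENNReal.ofReal_add hK0 (by positivity),
            ENNReal.ofReal_mul (by positivity), ENNReal.ofReal_natCast]
  have htoReal := ENNReal.toReal_mono (by exact ENNReal.ofReal_ne_top) hPE
  rw [ENNReal.toReal_ofReal (by positivity)] at htoReal
  refine htoReal.trans_eq ?_
  have hcast : ((n - f : ℕ) : ℝ) = (n : ℝ) - f := by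
    rw [Nat.cast_sub hf]
  rw [hcast, hK, mul_div_assoc]
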